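/- arXiv:1912.05815 — 2 statements merged into one kernel-verified Lean document; each statement's English description precedes it below -/
import Mathlib

section
/- Let R be a finite commutative chain ring with maximal ideal ⟨γ⟩ of nilpotency index e, and let λ be a unit of R. Let μ : R[x]/⟨x^N - λ⟩ → (R/⟨γ⟩)[x]/⟨x^N - λ̄⟩ be the coefficientwise reduction map. Let c(x) = γ^ℓ A(x) be a nonzero element with 0 ≤ ℓ ≤ e-1 and μ(A(x)) ≠ 0. Then depth(c(x)) ≥ depth(μ(A(x))). -/
open IsLocalRing

variable {S : Type*} [CommRing S]

/-- The derivative (difference) operator on sequences/vectors. -/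
def der (a : ℕ → S) : ℕ → S := fun k => a (k + 1) - a k

open Classical in
/-- Depth of a vector `a ∈ S^N`. -/
noncomputable def depth (N : ℕ) (a : ℕ → S) : ℕ :=
  if h : ∃ i, i < N ∧ ∀ k, k < N - i → der^[i] a k = 0 then Nat.find h else N

lemma der_iter_mul (r : S) (a : ℕ → S) (i : ℕ) :
    der^[i] (fun k => r * a k) = fun k => r * der^[i] a k := by
  induction i with
  | zero => rfl
  | succ i ih =>
    rw [Function.iterate_succ_apply', Function.iterate_succ_apply', ih]
    funext k
    simp [der, mul_sub]

lemma der_iter_hom {T : Type*} [CommRing T] (f : S →+* T) (a : ℕ → S) (i : ℕ) :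
    der^[i] (fun k => f (a k)) = fun k => f (der^[i] a k) := by
  induction i with
  | zero => rfl
  | succ i ih =>
    rw [Function.iterate_succ_apply', Function.iterate_succ_apply', ih]
    funext k
    simp [der, map_sub]

theorem depth_ge_depth_residue (R : Type*) [CommRing R] [Finite R] [IsLocalRing R]
    (hchain : ∀ I J : Ideal R, I ≤ J ∨ J ≤ I)
    (γ : R) (hγ : maximalIdeal R = Ideal.span {γ})
    (e : ℕ) (he : 0 < e) (hnil : γ ^ e = 0) (hnil' : γ ^ (e - 1) ≠ 0)
    (lam : R) (hlam : IsUnit lam)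
    (N : ℕ) (hN : 0 < N) (ℓ : ℕ) (hℓ : ℓ ≤ e - 1)
    (A : ℕ → R) (hA : ∃ k, k < N ∧ residue R (A k) ≠ 0)
    (hc : ∃ k, k < N ∧ γ ^ ℓ * A k ≠ 0) :
    depth N (fun k => γ ^ ℓ * A k) ≥ depth N (fun k => residue R (A k)) := by
  classical
  have key : ∀ x : R, γ ^ ℓ * x = 0 → residue R x = 0 := by
    intro x hx
    by_contra hres
    have hxunit : IsUnit x := by
      by_contra hu
      exact hres (Ideal.Quotient.eq_zero_iff_mem.mpr ((mem_maximalIdeal x).mpr hu))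
    obtain ⟨u, rfl⟩ := hxunit
    have hγℓ : γ ^ ℓ = 0 := by
      have := congrArg (fun y => y * (↑u⁻¹ : R)) hx
      simpa [mul_assoc] using this
    apply hnil'
    have : e - 1 = ℓ + (e - 1 - ℓ) := by omega
    rw [this, pow_add, hγℓ, zero_mul]
  unfold depth
  by_cases h1 : ∃ i, i < N ∧ ∀ k, k < N - i → der^[i] (fun k => γ ^ ℓ * A k) k = 0
  · rw [dif_pos h1]
    obtain ⟨hi0, hz⟩ := Nat.find_spec h1
    have h2 : ∃ i, i < N ∧ ∀ k, k < N - i → der^[i] (fun k => residue R (A k)) k = 0 := by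
      refine ⟨Nat.find h1, hi0, fun k hk => ?_⟩
      have := hz k hk
      rw [der_iter_mul] at this
      rw [der_iter_hom]
      exact key _ this
    rw [dif_pos h2]
    exact Nat.find_le ⟨hi0, fun k hk => by
      have := hz k hk
      rw [der_iter_mul] at this
      rw [der_iter_hom]
      exact key _ this⟩
  · rw [dif_neg h1]
    split
    · next h2 => exact le_of_lt (Nat.find_spec h2).1
    · exact le_refl N
end

section
/- Let F_q be a finite field and η a nonzero element of F_q with η ≠ 1. Let C be a nontrivial η-constacyclic code of length N over F_q with generator polynomial g(x) of degree d. Then the depth spectrum of C is exactly {d+1, d+2, ..., N}; that is, the set of depths of nonzero codewords of C equals {deg g(x) + 1, ..., N}. -/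
open Polynomial

variable {S : Type*} [CommRing S]

namespace DepthAux

variable {F : Type*} [Field F]

noncomputable def fpol (η : F) (N : ℕ) : Polynomial F := X ^ N - C η

noncomputable def sP (η : F) (N t : ℕ) (c : Polynomial F) : Polynomial F :=
  ((C η⁻¹ * X ^ (N - 1) - 1) ^ t * c) %ₘ fpol η N

noncomputable def rP (η : F) (N t : ℕ) (c : Polynomial F) : Polynomial F :=
  ((1 - X) ^ t * c) %ₘ fpol η N

variable {η : F} {N : ℕ}

lemma fpol_monic (hN : 0 < N) : (fpol η N).Monic :=
  monic_X_pow_sub_C η hN.ne'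

lemma fpol_deg (hN : 0 < N) : (fpol η N).degree = (N : ℕ) :=
  degree_X_pow_sub_C hN η

lemma fpol_natDeg : (fpol η N).natDegree = N := natDegree_X_pow_sub_C

lemma dvd_sub_mod (hN : 0 < N) (a : Polynomial F) :
    fpol η N ∣ a - a %ₘ fpol η N :=
  ⟨a /ₘ fpol η N, by
    have h := modByMonic_add_div a (fpol η N)
    linear_combination -h⟩

lemma rep_eq (hN : 0 < N) {a b : Polynomial F} (h : fpol η N ∣ a - b)
    (hb : b.degree < (N : WithBot ℕ)) : a %ₘ fpol η N = b := by
  have h2 : fpol η N ∣ a %ₘ fpol η N - b := by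
    have := dvd_sub h (dvd_sub_mod hN a)
    simpa using this
  have hdeg : (a %ₘ fpol η N - b).degree < (fpol η N).degree := by
    rw [fpol_deg hN]
    refine lt_of_le_of_lt (degree_sub_le _ _) (max_lt ?_ hb)
    exact (degree_modByMonic_lt _ (fpol_monic hN)).trans_eq (fpol_deg hN)
  have := eq_zero_of_dvd_of_degree_lt h2 hdeg
  exact sub_eq_zero.mp this

lemma mod_congr (hN : 0 < N) {a b : Polynomial F} (h : fpol η N ∣ a - b) :
    a %ₘ fpol η N = b %ₘ fpol η N := by
  refine rep_eq hN ?_ ?_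
  · have := dvd_add h (dvd_sub_mod hN b)
    simpa using this
  · exact (degree_modByMonic_lt _ (fpol_monic hN)).trans_eq (fpol_deg hN)

lemma step (hN : 0 < N) (hη0 : η ≠ 0) {u : Polynomial F} (hu : u.degree < (N : WithBot ℕ))
    {k : ℕ} (hk : k + 1 < N) :
    (((C η⁻¹ * X ^ (N - 1) - 1) * u) %ₘ fpol η N).coeff k = u.coeff (k + 1) - u.coeff k := by
  set v : Polynomial F := divX u + C η⁻¹ * C (u.coeff 0) * X ^ (N - 1) - u with hv
  have h1 : (X : Polynomial F) ^ (N - 1) * X = X ^ N := by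
    rw [← pow_succ]
    congr 1
    omega
  have h2 : (C η⁻¹ : Polynomial F) * C η = 1 := by
    rw [← C_mul, inv_mul_cancel₀ hη0, C_1]
  have hu' : (X : Polynomial F) * divX u + C (u.coeff 0) = u := X_mul_divX_add u
  have key : (C η⁻¹ * X ^ (N - 1) - 1) * u - v = fpol η N * (C η⁻¹ * divX u) := by
    rw [hv, fpol]
    linear_combination (-(C η⁻¹ * X ^ (N - 1))) * hu' + (C η⁻¹ * divX u) * h1 + divX u * h2
  have hvdeg : v.degree < (N : WithBot ℕ) := by
    rw [hv]
    refine lt_of_le_of_lt (degree_sub_le _ _)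
      (max_lt (lt_of_le_of_lt (degree_add_le _ _) (max_lt ?_ ?_)) hu)
    · rcases eq_or_ne u 0 with rfl | hu0
      · simp only [divX_zero, degree_zero]
        exact WithBot.bot_lt_coe N
      · exact lt_trans (degree_divX_lt hu0) hu
    · refine lt_of_le_of_lt ?_ (show ((N - 1 : ℕ) : WithBot ℕ) < (N : ℕ) by
        exact_mod_cast Nat.sub_lt hN one_pos)
      rw [← C_mul]
      exact degree_C_mul_X_pow_le _ _
  have hrep : ((C η⁻¹ * X ^ (N - 1) - 1) * u) %ₘ fpol η N = v := rep_eq hN ⟨_, key⟩ hvdeg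
  rw [hrep, hv]
  simp only [coeff_sub, coeff_add, coeff_divX, mul_assoc, ← C_mul, coeff_C_mul, coeff_X_pow,
    if_neg (show ¬ k = N - 1 by omega), mul_zero, add_zero]

lemma sP_deg (hN : 0 < N) (t : ℕ) (c : Polynomial F) :
    (sP η N t c).degree < (N : WithBot ℕ) :=
  (degree_modByMonic_lt _ (fpol_monic hN)).trans_eq (fpol_deg hN)

lemma sP_natDeg (hN : 0 < N) (t : ℕ) (c : Polynomial F) :
    (sP η N t c).natDegree ≤ N - 1 := by
  rcases eq_or_ne (sP η N t c) 0 with hs | hs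
  · rw [hs, natDegree_zero]
    omega
  · have := (natDegree_lt_iff_degree_lt hs).mpr (sP_deg hN t c)
    omega

lemma sP_succ (hN : 0 < N) (t : ℕ) (c : Polynomial F) :
    sP η N (t + 1) c = ((C η⁻¹ * X ^ (N - 1) - 1) * sP η N t c) %ₘ fpol η N := by
  have h : fpol η N ∣ (C η⁻¹ * X ^ (N - 1) - 1) ^ (t + 1) * c
      - (C η⁻¹ * X ^ (N - 1) - 1) * sP η N t c := by
    obtain ⟨q, hq⟩ := dvd_sub_mod (η := η) hN ((C η⁻¹ * X ^ (N - 1) - 1) ^ t * c)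
    refine ⟨(C η⁻¹ * X ^ (N - 1) - 1) * q, ?_⟩
    rw [sP] at *
    linear_combination (C η⁻¹ * X ^ (N - 1) - 1) * hq
  exact mod_congr hN h

lemma sP_coeff (hN : 0 < N) (hη0 : η ≠ 0) {c : Polynomial F}
    (hc : c.degree < (N : WithBot ℕ)) :
    ∀ t k, k < N - t → (sP η N t c).coeff k = der^[t] c.coeff k := by
  intro t
  induction t with
  | zero =>
    intro k _
    rw [sP, pow_zero, one_mul,
      (modByMonic_eq_self_iff (fpol_monic hN)).mpr (by rw [fpol_deg hN]; exact hc)]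
    simp
  | succ t ih =>
    intro k hk
    rw [sP_succ hN, step hN hη0 (sP_deg hN t c) (show k + 1 < N by omega),
      ih (k + 1) (by omega), ih k (by omega), Function.iterate_succ_apply']
    rfl

lemma rP_eq (hN : 0 < N) (hη0 : η ≠ 0) (t : ℕ) (c : Polynomial F) :
    rP η N t c = (X ^ t * sP η N t c) %ₘ fpol η N := by
  have h1 : (X : Polynomial F) ^ (N - 1) * X = X ^ N := by
    rw [← pow_succ]
    congr 1
    omega
  have h2 : (C η⁻¹ : Polynomial F) * C η = 1 := by
    rw [← C_mul, inv_mul_cancel₀ hη0, C_1]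
  have hd1 : fpol η N ∣ (1 - X : Polynomial F) - X * (C η⁻¹ * X ^ (N - 1) - 1) := by
    refine ⟨-C η⁻¹, ?_⟩
    rw [fpol]
    linear_combination (-(C η⁻¹)) * h1 - h2
  have hd2 : fpol η N ∣ ((1 - X : Polynomial F)) ^ t - (X * (C η⁻¹ * X ^ (N - 1) - 1)) ^ t :=
    hd1.trans (sub_dvd_pow_sub_pow _ _ t)
  have hstep : rP η N t c = ((X * (C η⁻¹ * X ^ (N - 1) - 1)) ^ t * c) %ₘ fpol η N := by
    refine mod_congr hN ?_
    obtain ⟨q, hq⟩ := hd2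
    exact ⟨q * c, by linear_combination c * hq⟩
  rw [hstep]
  refine mod_congr hN ?_
  obtain ⟨q, hq⟩ := dvd_sub_mod (η := η) hN ((C η⁻¹ * X ^ (N - 1) - 1) ^ t * c)
  refine ⟨X ^ t * q, ?_⟩
  rw [sP] at *
  rw [mul_pow]
  linear_combination (X : Polynomial F) ^ t * hq

lemma key_iff (hN : 0 < N) (hη0 : η ≠ 0) {c : Polynomial F}
    (hc : c.degree < (N : WithBot ℕ)) {t : ℕ} (ht : t ≤ N) :
    (∀ k, k < N - t → der^[t] c.coeff k = 0) ↔
      (rP η N t c = 0 ∨ (rP η N t c).natDegree < t) := by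
  constructor
  · intro h
    have hlow : ∀ k, k < N - t → (sP η N t c).coeff k = 0 := fun k hk =>
      (sP_coeff hN hη0 hc t k hk).trans (h k hk)
    obtain ⟨w, hw⟩ : X ^ (N - t) ∣ sP η N t c := X_pow_dvd_iff.mpr hlow
    have hpow : (X : Polynomial F) ^ t * X ^ (N - t) = X ^ N := by
      rw [← pow_add]
      congr 1
      omega
    have hXt : X ^ t * sP η N t c - C η * w = fpol η N * w := by
      rw [hw, fpol]
      linear_combination w * hpow
    rcases eq_or_ne w 0 with rfl | hw0
    · left
      rw [rP_eq hN hη0, hw, mul_zero, mul_zero, zero_modByMonic]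
    · have hwdeg : w.natDegree < t := by
        have hs0 : sP η N t c ≠ 0 := by
          rw [hw]
          exact mul_ne_zero (pow_ne_zero _ X_ne_zero) hw0
        have h1 : (sP η N t c).natDegree = N - t + w.natDegree := by
          rw [hw, natDegree_mul (pow_ne_zero _ X_ne_zero) hw0, natDegree_X_pow]
        have h2 := (natDegree_lt_iff_degree_lt hs0).mpr (sP_deg hN t c)
        omega
      have hCw0 : C η * w ≠ 0 := mul_ne_zero (by simpa using hη0) hw0
      have hCwdeg : (C η * w).natDegree < t := by
        rwa [natDegree_C_mul hη0]
      have hrp : rP η N t c = C η * w := by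
        rw [rP_eq hN hη0]
        exact rep_eq hN ⟨w, hXt⟩ ((natDegree_lt_iff_degree_lt hCw0).mp (by omega))
      right
      rw [hrp]
      exact hCwdeg
  · intro h k hk
    rw [← sP_coeff hN hη0 hc t k hk]
    have hdvd2 : fpol η N ∣ X ^ t * sP η N t c - rP η N t c := by
      rw [rP_eq hN hη0]
      exact dvd_sub_mod hN _
    obtain ⟨q, hq⟩ := hdvd2
    have hqdeg : q = 0 ∨ q.natDegree < t := by
      rcases eq_or_ne q 0 with h0 | h0
      · exact Or.inl h0
      · right
        have hfq : (fpol η N * q).natDegree = N + q.natDegree := by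
          rw [natDegree_mul (fpol_monic (η := η) hN).ne_zero h0, fpol_natDeg]
        have hle : (X ^ t * sP η N t c - rP η N t c).natDegree ≤ t + (N - 1) := by
          refine le_trans (natDegree_sub_le _ _) (max_le ?_ ?_)
          · refine le_trans natDegree_mul_le ?_
            have h1 := sP_natDeg (η := η) (N := N) hN t c
            rw [natDegree_X_pow]
            omega
          · rcases h with h | h
            · rw [h, natDegree_zero]
              omega
            · omega
        rw [← hq] at hfq
        omega
    have hqc : q.coeff (t + k) = 0 := by
      rcases hqdeg with rfl | hlt
      · simp
      · exact coeff_eq_zero_of_natDegree_lt (by omega)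
    have hrc : (rP η N t c).coeff (t + k) = 0 := by
      rcases h with h | h
      · rw [h]
        simp
      · exact coeff_eq_zero_of_natDegree_lt (by omega)
    have hXq : (X ^ N * q).coeff (t + k) = 0 :=
      X_pow_dvd_iff.mp (dvd_mul_right _ _) (t + k) (by omega)
    have := congrArg (fun p : Polynomial F => p.coeff (t + k)) hq
    simp only [coeff_sub] at this
    rw [show t + k = k + t by omega] at this
    rw [coeff_X_pow_mul] at this
    rw [show k + t = t + k by omega] at this
    rw [hrc, sub_zero, fpol, sub_mul, coeff_sub, hXq, coeff_C_mul, hqc] at this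
    rw [this]
    ring

lemma one_sub_X_eq : ((1 : Polynomial F) - X) = -(X - C 1) := by
  rw [C_1]; ring

lemma one_sub_X_ne : ((1 : Polynomial F) - X) ≠ 0 := by
  rw [one_sub_X_eq, neg_ne_zero]
  exact X_sub_C_ne_zero 1

lemma one_sub_X_natDeg : ((1 : Polynomial F) - X).natDegree = 1 := by
  rw [one_sub_X_eq, natDegree_neg, natDegree_X_sub_C]

lemma rP_succ_eq (hN : 0 < N) {c : Polynomial F} {s : ℕ}
    (hdeg : ((1 - X) * rP η N s c).degree < (N : WithBot ℕ)) :
    rP η N (s + 1) c = (1 - X) * rP η N s c := by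
  refine rep_eq hN ?_ hdeg
  obtain ⟨q, hq⟩ := dvd_sub_mod (η := η) hN ((1 - X) ^ s * c)
  refine ⟨(1 - X) * q, ?_⟩
  rw [rP]
  linear_combination (1 - X : Polynomial F) * hq

lemma Q_mono (hN : 0 < N) {c : Polynomial F} {s u : ℕ} (hsu : s ≤ u) (huN : u ≤ N)
    (h : rP η N s c = 0 ∨ (rP η N s c).natDegree < s) :
    rP η N u c = 0 ∨ (rP η N u c).natDegree < u := by
  revert huN
  induction u, hsu using Nat.le_induction with
  | base => exact fun _ => h
  | succ n hn ih =>
    intro hn1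
    have hQ := ih (by omega)
    rcases eq_or_ne (rP η N n c) 0 with h0 | h0
    · left
      rw [rP_succ_eq hN (by rw [h0, mul_zero, degree_zero]; exact WithBot.bot_lt_coe N), h0,
        mul_zero]
    · rcases hQ with h' | hlt
      · exact absurd h' h0
      · have hne : (1 - X) * rP η N n c ≠ 0 := mul_ne_zero one_sub_X_ne h0
        have hnat : ((1 - X) * rP η N n c).natDegree = 1 + (rP η N n c).natDegree := by
          rw [natDegree_mul one_sub_X_ne h0, one_sub_X_natDeg]
        right
        rw [rP_succ_eq hN ((natDegree_lt_iff_degree_lt hne).mp (by omega)), hnat]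
        omega

lemma not_X_sub_one_dvd (hη1 : η ≠ 1) : ¬ (X - C 1 : Polynomial F) ∣ fpol η N := by
  rw [dvd_iff_isRoot, IsRoot, fpol]
  simp only [eval_sub, eval_pow, eval_X, eval_C, one_pow]
  rw [sub_eq_zero]
  exact fun hcon => hη1 hcon.symm

lemma coprime_one_sub_X (hη1 : η ≠ 1) :
    IsCoprime (fpol η N) ((1 : Polynomial F) - X) := by
  have h := ((irreducible_X_sub_C (1 : F)).coprime_iff_not_dvd).mpr
    (not_X_sub_one_dvd (η := η) (N := N) hη1)
  have h2 : IsCoprime (fpol η N) (-(X - C 1)) := h.symm.neg_right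
  rwa [← one_sub_X_eq] at h2

end DepthAux

open DepthAux in
theorem depth_spectrum_constacyclic (F : Type*) [Field F] [Fintype F]
    (N : ℕ) (η : F) (hη0 : η ≠ 0) (hη1 : η ≠ 1)
    (g : Polynomial F) (hg : g.Monic) (hdvd : g ∣ (X ^ N - C η))
    (d : ℕ) (hd : g.natDegree = d) (hd0 : 0 < d) (hdN : d < N) :
    {t : ℕ | ∃ c : Polynomial F, c ≠ 0 ∧ c.natDegree < N ∧ g ∣ c ∧ depth N c.coeff = t} =
      Set.Icc (d + 1) N := by
  classical
  have hN : 0 < N := hd0.trans hdN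
  have hgf : g ∣ fpol η N := hdvd
  have hg0 : g ≠ 0 := hg.ne_zero
  have hX1 : ¬ (X - C 1 : Polynomial F) ∣ fpol η N := not_X_sub_one_dvd hη1
  have hcop : IsCoprime (fpol η N) ((1 : Polynomial F) - X) := coprime_one_sub_X hη1
  have hg1 : Polynomial.eval 1 g ≠ 0 := by
    intro hcon
    exact hX1 ((dvd_iff_isRoot.mpr hcon).trans hgf)
  have noQ : ∀ c : Polynomial F, c ≠ 0 → c.natDegree < N → g ∣ c → ∀ s, s ≤ d →
      ¬ (rP η N s c = 0 ∨ (rP η N s c).natDegree < s) := by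
    intro c hc0 hcN hgc s hs hQ
    have hgr : g ∣ rP η N s c := by
      have h1 : fpol η N ∣ (1 - X) ^ s * c - rP η N s c := by
        rw [rP]; exact dvd_sub_mod hN _
      have h2 : g ∣ (1 - X) ^ s * c := hgc.mul_left _
      have := dvd_sub h2 (hgf.trans h1)
      simpa using this
    have hr0 : rP η N s c = 0 := by
      rcases hQ with h | h
      · exact h
      · by_contra h0
        have := natDegree_le_of_dvd hgr h0
        omega
    have hfc : fpol η N ∣ (1 - X) ^ s * c := by
      have h1 := dvd_sub_mod (η := η) hN ((1 - X) ^ s * c)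
      rw [rP] at hr0
      rw [hr0, sub_zero] at h1
      exact h1
    have hfc2 : fpol η N ∣ c := (hcop.pow_right).dvd_of_dvd_mul_left hfc
    exact hc0 (eq_zero_of_dvd_of_natDegree_lt hfc2 (by rw [fpol_natDeg]; exact hcN))
  ext t
  simp only [Set.mem_setOf_eq, Set.mem_Icc]
  constructor
  · rintro ⟨c, hc0, hcN, hgc, rfl⟩
    have hcdeg : c.degree < (N : WithBot ℕ) := (natDegree_lt_iff_degree_lt hc0).mp hcN
    rw [depth]
    split_ifs with hEx
    · have hspec := Nat.find_spec hEx
      have hlt : Nat.find hEx < N := hspec.1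
      refine ⟨?_, by omega⟩
      by_contra hle
      push_neg at hle
      have hQ := (key_iff hN hη0 hcdeg hlt.le).mp hspec.2
      exact noQ c hc0 hcN hgc _ (by omega) hQ
    · omega
  · rintro ⟨ht1, ht2⟩
    obtain ⟨uu, vv, huv⟩ := hcop.pow_right (n := t)
    set w : Polynomial F := X ^ (t - 1 - d) * g with hw
    have hw0 : w ≠ 0 := mul_ne_zero (pow_ne_zero _ X_ne_zero) hg0
    have hwdeg : w.natDegree = t - 1 := by
      rw [hw, natDegree_mul (pow_ne_zero _ X_ne_zero) hg0, natDegree_X_pow, hd]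
      omega
    set c : Polynomial F := (vv * (C η * w)) %ₘ fpol η N with hc
    have hCw0 : C η * w ≠ 0 := mul_ne_zero (by simpa using hη0) hw0
    have hCwdeg : (C η * w).natDegree = t - 1 := by rw [natDegree_C_mul hη0, hwdeg]
    have hcong : fpol η N ∣ (1 - X) ^ t * c - C η * w := by
      obtain ⟨q1, hq1⟩ := dvd_sub_mod (η := η) hN (vv * (C η * w))
      refine ⟨-(1 - X) ^ t * q1 - uu * (C η * w), ?_⟩
      rw [hc]
      linear_combination (-(1 - X : Polynomial F) ^ t) * hq1 + (C η * w) * huv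
    have hgc : g ∣ c := by
      obtain ⟨q1, hq1⟩ := dvd_sub_mod (η := η) hN (vv * (C η * w))
      have hgw : g ∣ w := dvd_mul_left g _
      have h2 : g ∣ vv * (C η * w) := (hgw.mul_left _).mul_left _
      have hceq : c = vv * (C η * w) - fpol η N * q1 := by linear_combination -hq1
      rw [hceq]
      exact dvd_sub h2 (hgf.mul_right q1)
    have hc0 : c ≠ 0 := by
      intro h0
      rw [h0, mul_zero, zero_sub, dvd_neg] at hcong
      exact hCw0 (eq_zero_of_dvd_of_natDegree_lt hcong (by rw [fpol_natDeg, hCwdeg]; omega))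
    have hcN : c.natDegree < N := by
      refine (natDegree_lt_iff_degree_lt hc0).mpr ?_
      rw [hc]
      exact (degree_modByMonic_lt _ (fpol_monic hN)).trans_eq (fpol_deg hN)
    have hcdeg : c.degree < (N : WithBot ℕ) := (natDegree_lt_iff_degree_lt hc0).mp hcN
    have hrt : rP η N t c = C η * w := by
      rw [rP]
      exact rep_eq hN hcong ((natDegree_lt_iff_degree_lt hCw0).mp (by omega))
    have hQt : rP η N t c = 0 ∨ (rP η N t c).natDegree < t := by
      right
      rw [hrt, hCwdeg]
      omega
    have hnQ : ¬ (rP η N (t - 1) c = 0 ∨ (rP η N (t - 1) c).natDegree < t - 1) := by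
      intro hQ
      have hdvd1 : fpol η N ∣ (1 - X) ^ (t - 1) * c - rP η N (t - 1) c := by
        rw [rP]; exact dvd_sub_mod hN _
      have hdvd2 : fpol η N ∣ (1 - X) ^ t * c - (1 - X) * rP η N (t - 1) c := by
        obtain ⟨q, hq⟩ := hdvd1
        refine ⟨(1 - X) * q, ?_⟩
        have hpow : ((1 - X : Polynomial F)) ^ t = (1 - X) * (1 - X) ^ (t - 1) := by
          rw [← pow_succ']
          congr 1
          omega
        rw [hpow]
        linear_combination (1 - X : Polynomial F) * hq
      have hdvd3 : fpol η N ∣ C η * w - (1 - X) * rP η N (t - 1) c := by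
        obtain ⟨q2, hq2⟩ := hdvd2
        obtain ⟨q3, hq3⟩ := hcong
        exact ⟨q2 - q3, by linear_combination hq2 - hq3⟩
      have heq : C η * w = (1 - X) * rP η N (t - 1) c := by
        have hdegb : (C η * w - (1 - X) * rP η N (t - 1) c).degree < (fpol η N).degree := by
          rw [fpol_deg hN]
          refine lt_of_le_of_lt (degree_sub_le _ _) (max_lt ?_ ?_)
          · exact (natDegree_lt_iff_degree_lt hCw0).mp (by omega)
          · rcases eq_or_ne (rP η N (t - 1) c) 0 with h0 | h0
            · rw [h0, mul_zero, degree_zero]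
              exact WithBot.bot_lt_coe N
            · have hne : (1 - X) * rP η N (t - 1) c ≠ 0 := mul_ne_zero one_sub_X_ne h0
              refine (natDegree_lt_iff_degree_lt hne).mp ?_
              rw [natDegree_mul one_sub_X_ne h0, one_sub_X_natDeg]
              rcases hQ with h | h
              · exact absurd h h0
              · omega
        exact sub_eq_zero.mp (eq_zero_of_dvd_of_degree_lt hdvd3 hdegb)
      have hev := congrArg (Polynomial.eval 1) heq
      rw [hw] at hev
      simp only [eval_mul, eval_C, eval_pow, eval_X, eval_sub, eval_one, one_pow, one_mul,
        sub_self, zero_mul] at hev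
      rcases mul_eq_zero.mp hev with h | h
      · exact hη0 h
      · exact hg1 h
    have hnQall : ∀ s, s < t → ¬ (rP η N s c = 0 ∨ (rP η N s c).natDegree < s) := by
      intro s hs hQ
      exact hnQ (Q_mono hN (show s ≤ t - 1 by omega) (by omega) hQ)
    have hPt : ∀ k, k < N - t → der^[t] c.coeff k = 0 := (key_iff hN hη0 hcdeg ht2).mpr hQt
    have hnPs : ∀ s, s < t → ¬ (∀ k, k < N - s → der^[s] c.coeff k = 0) := fun s hs hP =>
      hnQall s hs ((key_iff hN hη0 hcdeg (by omega)).mp hP)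
    refine ⟨c, hc0, hcN, hgc, ?_⟩
    rw [depth]
    rcases eq_or_lt_of_le ht2 with rfl | htN
    · rw [dif_neg]
      rintro ⟨i, hiN, hiP⟩
      exact hnPs i hiN hiP
    · rw [dif_pos ⟨t, htN, hPt⟩, Nat.find_eq_iff]
      exact ⟨⟨htN, hPt⟩, fun s hs hcon => hnPs s hs hcon.2⟩
end
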